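/- Let F be a distribution function in the class L_{β,γ}. Then F is regularly varying (i.e. F̄(λx)/F̄(x) converges to a positive finite limit λ^{−δ} for every λ > 0, for some δ ≥ 0) if and only if β = 1 and γ < ∞; and in that case F ∈ RV_{−γ}, i.e. F̄(λx)/F̄(x) → λ^{−γ} as x → +∞ for every λ > 0. -/

import Mathlib

open Filter MeasureTheory Real Topology

/-- A function `ℓ` is slowly varying if `ℓ(λ x)/ℓ(x) → 1` as `x → ∞` for every `λ > 0`. -/
def SlowlyVarying (ℓ : ℝ → ℝ) : Prop :=
  ∀ lam : ℝ, 0 < lam → Tendsto (fun x => ℓ (lam * x) / ℓ x) atTop (nhds 1)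

/-- Membership of a (tail of a) distribution function `F` in the class `L_{β,γ}`. -/
def MemClassL (β : ℝ) (γ : EReal) (F : ℝ → ℝ) : Prop :=
  ∃ (x₀ C : ℝ) (ℓ : ℝ → ℝ),
    0 ≤ x₀ ∧ 0 < C ∧ Measurable ℓ ∧ (∀ᶠ t in atTop, 0 < ℓ t) ∧
    SlowlyVarying ℓ ∧
    Tendsto (fun t => (ℓ t : EReal)) atTop (nhds γ) ∧
    Tendsto (fun x => (1 - F x) * Real.exp (∫ t in x₀..x, ℓ t * t ^ (-β)))
      atTop (nhds C)

/-- The tail of `F` is regularly varying with index `-δ`: `F̄(λx)/F̄(x) → λ^{-δ}`. -/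
def RegVarying (δ : ℝ) (F : ℝ → ℝ) : Prop :=
  ∀ lam : ℝ, 0 < lam →
    Tendsto (fun x => (1 - F (lam * x)) / (1 - F x)) atTop (nhds (lam ^ (-δ)))

/-- Integrability of the density is forced by the convergence hypothesis. -/
lemma aux_integrable (f : ℝ → ℝ) (x₀ C : ℝ) (hC : 0 < C) (Fb : ℝ → ℝ)
    (hFb : Tendsto Fb atTop (nhds 0))
    (h : Tendsto (fun x => Fb x * Real.exp (∫ t in x₀..x, f t)) atTop (nhds C)) :
    ∀ x, x₀ ≤ x → IntervalIntegrable f volume x₀ x := by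
  intro x hx
  by_contra hni
  have hall : ∀ y, x ≤ y → ¬ IntervalIntegrable f volume x₀ y := by
    intro y hy hIy
    exact hni (hIy.mono_set (Set.uIcc_subset_uIcc (Set.left_mem_uIcc)
      (by rw [Set.uIcc_of_le (hx.trans hy)]; exact ⟨hx, hy⟩)))
  have heq : ∀ᶠ y in atTop, Fb y * Real.exp (∫ t in x₀..y, f t) = Fb y := by
    filter_upwards [eventually_ge_atTop x] with y hy
    rw [intervalIntegral.integral_undef (hall y hy), Real.exp_zero, mul_one]
  have h0 : Tendsto Fb atTop (nhds C) := h.congr' heq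
  exact absurd (tendsto_nhds_unique h0 hFb) hC.ne'

/-- The normalized product `F̄(λx)/F̄(x) · exp(J(λx) − J(x))` tends to 1. -/
lemma aux_one (f : ℝ → ℝ) (x₀ C : ℝ) (hC : 0 < C) (Fb : ℝ → ℝ)
    (h : Tendsto (fun x => Fb x * Real.exp (∫ t in x₀..x, f t)) atTop (nhds C))
    (lam : ℝ) (hlam : 0 < lam) :
    Tendsto (fun x => Fb (lam * x) / Fb x *
      Real.exp ((∫ t in x₀..lam * x, f t) - ∫ t in x₀..x, f t)) atTop (nhds 1) := by
  have hGl : Tendsto (fun x => Fb (lam * x) * Real.exp (∫ t in x₀..lam * x, f t))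
      atTop (nhds C) := h.comp (tendsto_id.const_mul_atTop hlam)
  have := hGl.div h hC.ne'
  rw [div_self hC.ne'] at this
  refine this.congr fun x => ?_
  rw [Real.exp_sub]
  have h1 : Real.exp (∫ t in x₀..x, f t) ≠ 0 := Real.exp_ne_zero _
  field_simp
  rw [Pi.div_apply, div_mul_eq_mul_div, mul_div_mul_right _ _ h1]

/-- Convergence of `∫_x^{μx} ℓ(t)/t dt` to `γ₀ log μ`, for `μ ≥ 1`. -/
lemma aux_int_tendsto (ℓ : ℝ → ℝ) (γ₀ x₀ : ℝ) (hl : Tendsto ℓ atTop (nhds γ₀))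
    (hint : ∀ a b, x₀ ≤ a → a ≤ b → IntervalIntegrable (fun t => ℓ t * t⁻¹) volume a b)
    (μ : ℝ) (hμ : 1 ≤ μ) :
    Tendsto (fun x => ∫ t in x..μ * x, ℓ t * t⁻¹) atTop (nhds (γ₀ * Real.log μ)) := by
  rcases eq_or_lt_of_le hμ with hμ1 | hμ1
  · subst hμ1
    simp only [one_mul, intervalIntegral.integral_same, Real.log_one, mul_zero]
    exact tendsto_const_nhds
  have hlogμ : 0 < Real.log μ := Real.log_pos hμ1
  rw [Metric.tendsto_atTop]
  intro ε hε
  set ε' : ℝ := ε / (2 * Real.log μ) with hε'def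
  have hε' : 0 < ε' := by positivity
  obtain ⟨x₁, hx₁⟩ := (Metric.tendsto_atTop.mp hl) ε' hε'
  refine ⟨max x₁ (max x₀ 1), fun x hx => ?_⟩
  have hxx₁ : x₁ ≤ x := le_trans (le_max_left _ _) hx
  have hxx₀ : x₀ ≤ x := le_trans (le_max_of_le_right (le_max_left _ _)) hx
  have hx1 : (1:ℝ) ≤ x := le_trans (le_max_of_le_right (le_max_right _ _)) hx
  have hx0 : (0:ℝ) < x := lt_of_lt_of_le one_pos hx1
  have hxμx : x ≤ μ * x := le_mul_of_one_le_left hx0.le hμ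
  -- key integrals
  have hIℓ : IntervalIntegrable (fun t => ℓ t * t⁻¹) volume x (μ * x) :=
    hint x (μ * x) hxx₀ hxμx
  have hzero : (0:ℝ) ∉ Set.uIcc x (μ * x) := by
    rw [Set.uIcc_of_le hxμx]
    intro ⟨h1, _⟩; linarith
  have hIc : ∀ c : ℝ, IntervalIntegrable (fun t => c * t⁻¹) volume x (μ * x) := by
    intro c
    exact (ContinuousOn.intervalIntegrable ((continuousOn_const).mul
      (continuousOn_inv₀.mono (by intro t ht; exact ne_of_mem_of_not_mem ht hzero))))
  have hcint : ∀ c : ℝ, (∫ t in x..μ * x, c * t⁻¹) = c * Real.log μ := by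
    intro c
    rw [intervalIntegral.integral_const_mul, _root_.integral_inv hzero,
      mul_div_assoc, div_self hx0.ne', mul_one]
  -- split
  have hsub : (∫ t in x..μ * x, ℓ t * t⁻¹) - γ₀ * Real.log μ
      = ∫ t in x..μ * x, (ℓ t - γ₀) * t⁻¹ := by
    rw [← hcint γ₀, ← intervalIntegral.integral_sub hIℓ (hIc γ₀)]
    congr 1; funext t; ring
  rw [Real.dist_eq, hsub]
  have hbound : |∫ t in x..μ * x, (ℓ t - γ₀) * t⁻¹| ≤ |∫ t in x..μ * x, ε' * t⁻¹| := by
    rw [← Real.norm_eq_abs]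
    refine intervalIntegral.norm_integral_le_abs_of_norm_le ?_ (hIc ε')
    rw [ae_restrict_iff' measurableSet_uIoc]
    refine ae_of_all _ fun t ht => ?_
    rw [Set.uIoc_of_le hxμx] at ht
    have ht0 : 0 < t := lt_of_le_of_lt hx0.le ht.1
    have : |ℓ t - γ₀| ≤ ε' := le_of_lt (by
      have := hx₁ t (le_trans hxx₁ ht.1.le)
      rwa [Real.dist_eq] at this)
    calc ‖(ℓ t - γ₀) * t⁻¹‖ = |ℓ t - γ₀| * t⁻¹ := by
          rw [norm_mul, Real.norm_eq_abs, Real.norm_eq_abs, abs_of_pos (inv_pos.mpr ht0)]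
      _ ≤ ε' * t⁻¹ := by
          exact mul_le_mul_of_nonneg_right this (inv_pos.mpr ht0).le
  calc |∫ t in x..μ * x, (ℓ t - γ₀) * t⁻¹| ≤ |∫ t in x..μ * x, ε' * t⁻¹| := hbound
    _ = ε' * Real.log μ := by rw [hcint ε', abs_of_nonneg (by positivity)]
    _ = ε / 2 := by rw [hε'def]; field_simp
    _ < ε := by linarith

/-- Divergence of `∫_x^{2x} f` when `f(t) ≥ M/t` eventually, for every `M`. -/
lemma aux_bad (f : ℝ → ℝ) (x₀ : ℝ)
    (hint : ∀ a b, x₀ ≤ a → a ≤ b → IntervalIntegrable f volume a b)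
    (hM : ∀ M : ℝ, ∀ᶠ t in atTop, M * t⁻¹ ≤ f t) :
    Tendsto (fun x => ∫ t in x..2 * x, f t) atTop atTop := by
  rw [tendsto_atTop]
  intro b
  set M : ℝ := b / Real.log 2 with hMdef
  have hlog2 : 0 < Real.log 2 := Real.log_pos one_lt_two
  obtain ⟨x₁, hx₁⟩ := (hM M).exists_forall_of_atTop
  filter_upwards [eventually_ge_atTop (max x₁ (max x₀ 1))] with x hx
  have hxx₁ : x₁ ≤ x := le_trans (le_max_left _ _) hx
  have hxx₀ : x₀ ≤ x := le_trans (le_max_of_le_right (le_max_left _ _)) hx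
  have hx1 : (1:ℝ) ≤ x := le_trans (le_max_of_le_right (le_max_right _ _)) hx
  have hx0 : (0:ℝ) < x := lt_of_lt_of_le one_pos hx1
  have hx2x : x ≤ 2 * x := by linarith
  have hzero : (0:ℝ) ∉ Set.uIcc x (2 * x) := by
    rw [Set.uIcc_of_le hx2x]
    intro ⟨h1, _⟩; linarith
  have hIc : IntervalIntegrable (fun t => M * t⁻¹) volume x (2 * x) :=
    (ContinuousOn.intervalIntegrable ((continuousOn_const).mul
      (continuousOn_inv₀.mono (by intro t ht; exact ne_of_mem_of_not_mem ht hzero))))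
  have hcint : (∫ t in x..2 * x, M * t⁻¹) = M * Real.log 2 := by
    rw [intervalIntegral.integral_const_mul, _root_.integral_inv hzero,
      mul_div_assoc, div_self hx0.ne', mul_one]
  have hmono : (∫ t in x..2 * x, M * t⁻¹) ≤ ∫ t in x..2 * x, f t := by
    refine intervalIntegral.integral_mono_on hx2x hIc (hint x (2 * x) hxx₀ hx2x) ?_
    intro t ht
    exact hx₁ t (le_trans hxx₁ ht.1)
  have : M * Real.log 2 = b := by rw [hMdef]; field_simp
  linarith [hmono, hcint.symm.le]

/-- Let `F ∈ L_{β,γ}` (distribution function on `[0,∞)`, `F x < 1`,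
`β ≤ 1`, `γ ∈ (0,∞]`).  Then `F` is regularly varying (with some index `-δ ≤ 0`)
if and only if `β = 1` and `γ < ∞`; and in that case `F ∈ RV_{-γ}`. -/
theorem classL_regularlyVarying_iff
    (β : ℝ) (γ : EReal) (hβ1 : β ≤ 1) (hγ : 0 < γ)
    (F : ℝ → ℝ) (hmono : Monotone F) (hneg : ∀ x < 0, F x = 0)
    (hlt : ∀ x, F x < 1) (hlim : Tendsto F atTop (nhds 1))
    (hF : MemClassL β γ F) :
    ((∃ δ : ℝ, 0 ≤ δ ∧ RegVarying δ F) ↔ (β = 1 ∧ γ < ⊤)) ∧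
    (β = 1 → γ < ⊤ → RegVarying γ.toReal F) := by
  obtain ⟨x₀, C, ℓ, hx₀, hC, hmeas, hpos, hsv, hγlim, htend⟩ := hF
  set f : ℝ → ℝ := fun t => ℓ t * t ^ (-β) with hfdef
  set Fb : ℝ → ℝ := fun x => 1 - F x with hFbdef
  have hFb0 : Tendsto Fb atTop (nhds 0) := by
    have := (tendsto_const_nhds (x := (1:ℝ)) (f := atTop)).sub hlim
    simpa using this
  have hFbpos : ∀ x, 0 < Fb x := fun x => by simp [hFbdef, hlt x]
  have hint0 : ∀ x, x₀ ≤ x → IntervalIntegrable f volume x₀ x :=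
    aux_integrable f x₀ C hC Fb hFb0 htend
  have hint : ∀ a b, x₀ ≤ a → a ≤ b → IntervalIntegrable f volume a b := by
    intro a b ha hab
    exact (hint0 a ha).symm.trans (hint0 b (ha.trans hab))
  -- the good case
  have good : β = 1 → γ < ⊤ → RegVarying γ.toReal F := by
    intro hβ hγtop
    have hγne : γ ≠ ⊥ := ne_bot_of_gt hγ
    have hcoe : ((γ.toReal : ℝ) : EReal) = γ := EReal.coe_toReal hγtop.ne hγne
    set γ₀ : ℝ := γ.toReal with hγ₀def
    have hl : Tendsto ℓ atTop (nhds γ₀) := by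
      rw [← EReal.tendsto_coe]; rw [hcoe]; exact hγlim
    have hfeq : f = fun t => ℓ t * t⁻¹ := by
      funext t; rw [hfdef]; simp [hβ, Real.rpow_neg_one]
    -- interval integral difference tends to γ₀ log lam
    have hJdiff : ∀ lam : ℝ, 0 < lam →
        Tendsto (fun x => (∫ t in x₀..lam * x, f t) - ∫ t in x₀..x, f t)
          atTop (nhds (γ₀ * Real.log lam)) := by
      intro lam hlam
      have heq : ∀ᶠ x in atTop, ((∫ t in x₀..lam * x, f t) - ∫ t in x₀..x, f t)
          = ∫ t in x..lam * x, f t := by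
        filter_upwards [eventually_ge_atTop x₀,
          (tendsto_id.const_mul_atTop hlam).eventually_ge_atTop x₀] with x hx hlx
        exact intervalIntegral.integral_interval_sub_left (hint0 (lam * x) hlx) (hint0 x hx)
      have hint' : ∀ a b, x₀ ≤ a → a ≤ b →
          IntervalIntegrable (fun t => ℓ t * t⁻¹) volume a b := by
        intro a b ha hab; rw [← hfeq]; exact hint a b ha hab
      rcases le_or_gt 1 lam with hlam1 | hlam1
      · refine Tendsto.congr' (heq.mono fun x hx => hx.symm) ?_
        rw [hfeq]
        exact aux_int_tendsto ℓ γ₀ x₀ hl hint' lam hlam1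
      · -- lam < 1 : reduce to μ = lam⁻¹ ≥ 1
        have hμ : (1:ℝ) ≤ lam⁻¹ := one_le_inv₀ hlam |>.mpr hlam1.le
        have hcomp : Tendsto (fun x => ∫ t in lam * x..lam⁻¹ * (lam * x), ℓ t * t⁻¹)
            atTop (nhds (γ₀ * Real.log lam⁻¹)) :=
          (aux_int_tendsto ℓ γ₀ x₀ hl hint' lam⁻¹ hμ).comp (tendsto_id.const_mul_atTop hlam)
        have hcomp' : Tendsto (fun x => ∫ t in lam * x..x, ℓ t * t⁻¹)
            atTop (nhds (γ₀ * Real.log lam⁻¹)) := by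
          refine hcomp.congr fun x => ?_
          congr 1
          field_simp
        have := hcomp'.neg
        rw [Real.log_inv, mul_neg, neg_neg] at this
        refine Tendsto.congr' (heq.mono fun x hx => hx.symm) ?_
        rw [hfeq]
        refine this.congr fun x => ?_
        rw [← intervalIntegral.integral_symm]
    intro lam hlam
    have h1 := aux_one f x₀ C hC Fb htend lam hlam
    have h2 := (hJdiff lam hlam).neg
    have h3 : Tendsto (fun x => Real.exp (-((∫ t in x₀..lam * x, f t) - ∫ t in x₀..x, f t)))
        atTop (nhds (Real.exp (-(γ₀ * Real.log lam)))) :=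
      (Real.continuous_exp.tendsto _).comp h2
    have h4 := h1.mul h3
    rw [one_mul] at h4
    have h5 : Tendsto (fun x => Fb (lam * x) / Fb x) atTop
        (nhds (Real.exp (-(γ₀ * Real.log lam)))) := by
      refine h4.congr fun x => ?_
      rw [mul_assoc, ← Real.exp_add, add_neg_cancel, Real.exp_zero, mul_one]
    have hrw : Real.exp (-(γ₀ * Real.log lam)) = lam ^ (-γ₀) := by
      rw [Real.rpow_def_of_pos hlam]
      ring_nf
    rw [hrw] at h5
    exact h5
  -- the bad case: ¬(β = 1 ∧ γ < ⊤) implies the ratio at lam = 2 tends to 0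
  have bad : ¬(β = 1 ∧ γ < ⊤) →
      Tendsto (fun x => Fb (2 * x) / Fb x) atTop (nhds 0) := by
    intro hbad
    -- first: ℓ t * t^(1-β) → ∞
    have hprod : Tendsto (fun t => ℓ t * t ^ (1 - β)) atTop atTop := by
      rcases eq_or_lt_of_le (le_top : γ ≤ ⊤) with hγtop | hγtop
      · -- γ = ⊤ : ℓ → ∞
        have hltop : Tendsto ℓ atTop atTop := by
          rw [tendsto_atTop]
          intro b
          have := EReal.tendsto_nhds_top_iff_real.mp (hγtop ▸ hγlim) b
          filter_upwards [this] with t ht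
          exact_mod_cast ht.le
        refine tendsto_atTop_mono' atTop ?_ hltop
        filter_upwards [hpos, eventually_ge_atTop (1:ℝ)] with t hpt ht1
        exact le_mul_of_one_le_right hpt.le
          (Real.one_le_rpow ht1 (by linarith))
      · -- γ < ⊤, so β < 1
        have hβne : β ≠ 1 := fun h => hbad ⟨h, hγtop⟩
        have hβlt : β < 1 := lt_of_le_of_ne hβ1 hβne
        have hγne : γ ≠ ⊥ := ne_bot_of_gt hγ
        have hcoe : ((γ.toReal : ℝ) : EReal) = γ := EReal.coe_toReal hγtop.ne hγne
        have hl : Tendsto ℓ atTop (nhds γ.toReal) := by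
          rw [← EReal.tendsto_coe]; rw [hcoe]; exact hγlim
        have hγ₀pos : 0 < γ.toReal := by
          have := hγ; rw [← hcoe] at this; exact_mod_cast this
        exact Tendsto.pos_mul_atTop hγ₀pos hl (tendsto_rpow_atTop (by linarith))
    -- hence f t ≥ M / t eventually for every M
    have hM : ∀ M : ℝ, ∀ᶠ t in atTop, M * t⁻¹ ≤ f t := by
      intro M
      filter_upwards [hprod.eventually_ge_atTop M, eventually_ge_atTop (1:ℝ)] with t ht ht1
      have ht0 : (0:ℝ) < t := lt_of_lt_of_le one_pos ht1
      have hrpow : t ^ (1 - β) * t⁻¹ = t ^ (-β) := by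
        rw [← Real.rpow_neg_one t, ← Real.rpow_add ht0]
        ring_nf
      calc M * t⁻¹ ≤ (ℓ t * t ^ (1 - β)) * t⁻¹ :=
            mul_le_mul_of_nonneg_right ht (inv_pos.mpr ht0).le
        _ = ℓ t * t ^ (-β) := by rw [mul_assoc, hrpow]
        _ = f t := rfl
    have hdiv : Tendsto (fun x => ∫ t in x..2 * x, f t) atTop atTop :=
      aux_bad f x₀ hint hM
    -- translate into the difference of integrals from x₀
    have heq : ∀ᶠ x in atTop, (∫ t in x..2 * x, f t)
        = (∫ t in x₀..2 * x, f t) - ∫ t in x₀..x, f t := by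
      filter_upwards [eventually_ge_atTop x₀,
        (tendsto_id.const_mul_atTop two_pos).eventually_ge_atTop x₀] with x hx hlx
      exact (intervalIntegral.integral_interval_sub_left (hint0 (2 * x) hlx) (hint0 x hx)).symm
    have hdiv' : Tendsto (fun x => (∫ t in x₀..2 * x, f t) - ∫ t in x₀..x, f t)
        atTop atTop := hdiv.congr' heq
    have h1 := aux_one f x₀ C hC Fb htend 2 two_pos
    have h3 : Tendsto (fun x => Real.exp (-((∫ t in x₀..2 * x, f t) - ∫ t in x₀..x, f t)))
        atTop (nhds 0) :=
      Real.tendsto_exp_atBot.comp (tendsto_neg_atTop_atBot.comp hdiv')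
    have h4 := h1.mul h3
    rw [one_mul] at h4
    refine h4.congr fun x => ?_
    rw [mul_assoc, ← Real.exp_add, add_neg_cancel, Real.exp_zero, mul_one]
  refine ⟨⟨?_, ?_⟩, good⟩
  · rintro ⟨δ, hδ, hreg⟩
    by_contra hbad
    have h0 := bad hbad
    have h2 := hreg 2 two_pos
    have : (2:ℝ) ^ (-δ) = 0 := tendsto_nhds_unique h2 h0
    exact absurd this (Real.rpow_pos_of_pos two_pos _).ne'
  · rintro ⟨hβ, hγtop⟩
    refine ⟨γ.toReal, ?_, good hβ hγtop⟩
    have hγne : γ ≠ ⊥ := ne_bot_of_gt hγ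
    have hcoe : ((γ.toReal : ℝ) : EReal) = γ := EReal.coe_toReal hγtop.ne hγne
    have h0 : (0:ℝ) < γ.toReal := by rw [← hcoe] at hγ; exact_mod_cast hγ
    exact h0.le
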